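/- Let Ĝ be a finite connected weighted graph on vertex set V̂ with symmetric positive edge weights, D ⊊ V̂ a nonempty boundary set, Ã the substochastic matrix on V̂ ∖ D with Ã_{ij} = w_{ij}/w_i, and λ its largest eigenvalue. Suppose for each vertex i ∈ V̂ ∖ D a non-self-intersecting path γ_i of oriented edges of Ĝ from i to some vertex of D is given, and let |γ_i|_w = Σ_{(s,t)∈γ_i} 1/w_{st}. For each oriented edge (x,y) of Ĝ define ξ(x,y) = Σ_{i : (x,y) ∈ γ_i} w_i |γ_i|_w, and let ξ = max_{(x,y)} ξ(x,y). Then 1/(1 − λ) ≤ 2ξ; equivalently 1 − λ ≥ 1/(2ξ). -/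

import Mathlib

open Matrix Finset

section helpers
variable {V : Type*} [Fintype V] [DecidableEq V]

omit [Fintype V] [DecidableEq V] in
lemma zip_tail_nodup : ∀ (l : List V), l.Nodup → (l.zip l.tail).Nodup := by
  intro l
  induction l with
  | nil => simp
  | cons a t ih =>
    intro h
    cases t with
    | nil => simp
    | cons b s =>
      simp only [List.tail_cons, List.zip_cons_cons]
      rw [List.nodup_cons]
      refine ⟨fun hmem => (List.nodup_cons.mp h).1 (List.of_mem_zip hmem).1, ?_⟩
      have := ih (List.nodup_cons.mp h).2
      simpa using this

omit [Fintype V] [DecidableEq V] in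
lemma tele_cs (w : V → V → ℝ) (hnn : ∀ x y, 0 ≤ w x y) (F : V → ℝ) :
    ∀ (l : List V) (a : V), (a :: l).Chain' (fun x y => 0 < w x y) →
      (F a - F ((a :: l).getLast (List.cons_ne_nil a l))) ^ 2 ≤
      (((a :: l).zip l).map (fun e => 1 / w e.1 e.2)).sum *
      (((a :: l).zip l).map (fun e => w e.1 e.2 * (F e.1 - F e.2) ^ 2)).sum := by
  intro l
  induction l with
  | nil => intro a _; simp
  | cons b t ih =>
    intro a hc
    obtain ⟨hab, hc'⟩ := List.isChain_cons_cons.mp hc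
    have IH := ih b hc'
    set L' := (((b :: t).zip t).map (fun e => 1 / w e.1 e.2)).sum with hL'def
    set Q' := (((b :: t).zip t).map (fun e => w e.1 e.2 * (F e.1 - F e.2) ^ 2)).sum with hQ'def
    have hL' : 0 ≤ L' := by
      apply List.sum_nonneg
      intro x hx
      obtain ⟨e, _, rfl⟩ := List.mem_map.mp hx
      exact one_div_nonneg.mpr (hnn e.1 e.2)
    have hQ' : 0 ≤ Q' := by
      apply List.sum_nonneg
      intro x hx
      obtain ⟨e, _, rfl⟩ := List.mem_map.mp hx
      have := hnn e.1 e.2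
      positivity
    have hlast : (a :: b :: t).getLast (List.cons_ne_nil a (b :: t)) =
        (b :: t).getLast (List.cons_ne_nil b t) := by
      simp [List.getLast_cons]
    rw [hlast]
    simp only [List.zip_cons_cons, List.map_cons, List.sum_cons]
    rw [← hL'def, ← hQ'def]
    set W := w a b with hWdef
    set A := F a - F b with hAdef
    set B := F b - F ((b :: t).getLast (List.cons_ne_nil b t)) with hBdef
    have hsum : F a - F ((b :: t).getLast (List.cons_ne_nil b t)) = A + B := by
      rw [hAdef, hBdef]; ring
    rw [hsum]
    have hW : 0 < W := hab
    set u := 1 / W with hudef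
    have hp : u * W = 1 := one_div_mul_cancel hW.ne'
    have hp0 : 0 < u := by rw [hudef]; positivity
    have h1 : u * (W * A ^ 2) = A ^ 2 := by rw [← mul_assoc, hp, one_mul]
    have hexp : (u + L') * (W * A ^ 2 + Q') =
        u * (W * A ^ 2) + u * Q' + L' * (W * A ^ 2) + L' * Q' := by ring
    rw [hexp, h1]
    -- need: (A+B)^2 ≤ A^2 + u*Q' + L'*(W*A^2) + L'*Q'
    rcases eq_or_lt_of_le hL' with h0 | hLpos
    · have hB0 : B = 0 := by nlinarith [sq_nonneg B, IH]
      rw [hB0]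
      have := mul_nonneg hp0.le hQ'
      nlinarith [mul_nonneg hL' (mul_nonneg hW.le (sq_nonneg A)), mul_nonneg hL' hQ']
    · have h2 : u * Q' * (W * L') = L' * Q' := by
        calc u * Q' * (W * L') = (u * W) * (Q' * L') := by ring
        _ = L' * Q' := by rw [hp]; ring
      have h3 : (2 * (A * B)) * (W * L') ≤ (W * L' * A ^ 2 + u * Q') * (W * L') := by
        nlinarith [sq_nonneg (W * L' * A - B), IH, h2]
      have h4 : 2 * (A * B) ≤ W * L' * A ^ 2 + u * Q' :=
        le_of_mul_le_mul_right h3 (mul_pos hW hLpos)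
      nlinarith [IH, h4, mul_nonneg hL' (mul_nonneg hW.le (sq_nonneg A))]

lemma list_sum_indicator (l : List (V × V)) (hl : l.Nodup) (g : V × V → ℝ) :
    (l.map g).sum = ∑ e : V × V, if e ∈ l then g e else 0 := by
  rw [← List.sum_toFinset g hl]
  simp only [← List.mem_toFinset]
  rw [Finset.sum_ite_mem, Finset.univ_inter]
end helpers

/-- Diaconis–Stroock-type path bound: given, for each `i ∉ D`, a
non-self-intersecting path `p i` of edges of the weighted graph from `i` to the boundary
set `D`, and `ξ` dominating the weighted congestion
`ξ(x,y) = ∑_{i : (x,y) ∈ γ_i} w_i |γ_i|_w` of every oriented edge `(x,y)`,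
one has `1/(1 − λ) ≤ 2ξ`. -/
theorem stmt10 {V : Type*} [Fintype V] [DecidableEq V]
    (w : V → V → ℝ) (hsymm : ∀ x y, w x y = w y x) (hnonneg : ∀ x y, 0 ≤ w x y)
    (hirrefl : ∀ x, w x x = 0)
    (hconn : (SimpleGraph.fromRel (fun x y => 0 < w x y)).Connected)
    (wd : V → ℝ) (hwd : ∀ i, wd i = ∑ j, w i j) (hwdpos : ∀ i, 0 < wd i)
    (D : Finset V) (hD : D.Nonempty) (hDproper : D ≠ Finset.univ)
    (Atil : Matrix {i : V // i ∉ D} {i : V // i ∉ D} ℝ)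
    (hAtil : ∀ i j, Atil i j = w i.1 j.1 / wd i.1)
    (lam : ℝ) (hmem : lam ∈ spectrum ℝ Atil) (hub : ∀ μ ∈ spectrum ℝ Atil, μ ≤ lam)
    (p : V → List V)
    (hpath : ∀ i ∉ D, (p i).head? = some i ∧ (p i).Chain' (fun x y => 0 < w x y) ∧
        (∃ j ∈ D, (p i).getLast? = some j) ∧ (p i).Nodup)
    (ξ : ℝ)
    (hξ : ∀ x y : V, 0 < w x y →
      (∑ i ∈ Finset.univ \ D,
        if (x, y) ∈ (p i).zip (p i).tail then
          wd i * (((p i).zip (p i).tail).map (fun e => 1 / w e.1 e.2)).sum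
        else 0) ≤ ξ) :
    1 / (1 - lam) ≤ 2 * ξ := by
  classical
  -- extract an eigenvector
  have hdet : ((lam • (1 : Matrix {i : V // i ∉ D} {i : V // i ∉ D} ℝ)) - Atil).det = 0 := by
    have h1 := spectrum.mem_iff.mp hmem
    rw [Algebra.algebraMap_eq_smul_one] at h1
    by_contra hne
    exact h1 ((Matrix.isUnit_iff_isUnit_det _).mpr (isUnit_iff_ne_zero.mpr hne))
  obtain ⟨f, hf0, hfv⟩ := (Matrix.exists_mulVec_eq_zero_iff).mpr hdet
  rw [Matrix.sub_mulVec, Matrix.smul_mulVec, Matrix.one_mulVec, sub_eq_zero] at hfv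
  have heig : ∀ i : {i : V // i ∉ D}, ∑ j, Atil i j * f j = lam * f i := by
    intro i
    have := congrFun hfv.symm i
    simpa [Matrix.mulVec, dotProduct] using this
  set F : V → ℝ := fun x => if h : x ∈ D then 0 else f ⟨x, h⟩ with hFdef
  have hFD : ∀ x ∈ D, F x = 0 := by intro x hx; simp [hFdef, hx]
  have hFnD : ∀ (x : V) (h : x ∉ D), F x = f ⟨x, h⟩ := by intro x h; simp [hFdef, h]
  -- sums over univ reduce to subtype sums
  have hsum_red : ∀ g : V → ℝ, (∀ x ∈ D, g x = 0) →
      ∑ x, g x = ∑ j : {i : V // i ∉ D}, g j.1 := by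
    intro g hg
    have h1 : ∑ x ∈ Finset.univ \ D, g x = ∑ j : {i : V // i ∉ D}, g j.1 :=
      Finset.sum_subtype _ (by simp) g
    have h2 : ∑ x ∈ Finset.univ \ D, g x = ∑ x, g x :=
      Finset.sum_subset (Finset.subset_univ _) (fun x _ hx => hg x (by simpa using hx))
    rw [← h2, h1]
  -- eigen identity on V
  have hEig : ∀ (x : V), x ∉ D → ∑ y, w x y * F y = lam * (wd x * F x) := by
    intro x hx
    have h1 : ∑ y, w x y * F y = ∑ j : {i : V // i ∉ D}, w x j.1 * f j := by
      rw [hsum_red (fun y => w x y * F y) (fun y hy => by simp [hFD y hy])]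
      exact Finset.sum_congr rfl (fun j _ => by rw [hFnD j.1 j.2])
    have h2 := heig ⟨x, hx⟩
    simp only [hAtil] at h2
    have h3 : ∑ j : {i : V // i ∉ D}, w x j.1 / wd x * f j
        = (∑ j : {i : V // i ∉ D}, w x j.1 * f j) / wd x := by
      rw [Finset.sum_div]
      exact Finset.sum_congr rfl (fun j _ => by ring)
    rw [h3] at h2
    have h4 := (div_eq_iff (hwdpos x).ne').mp h2
    rw [h1, h4, hFnD x hx]
    ring
  -- the quantity S
  set S : ℝ := ∑ x, wd x * F x ^ 2 with hSdef
  have hSpos : 0 < S := by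
    obtain ⟨j0, hj0⟩ := Function.ne_iff.mp hf0
    have hj0' : f j0 ≠ 0 := by simpa using hj0
    rw [hSdef, hsum_red (fun x => wd x * F x ^ 2) (fun x hx => by simp [hFD x hx])]
    apply Finset.sum_pos'
    · intro j _
      have := (hwdpos j.1).le
      positivity
    · refine ⟨j0, Finset.mem_univ _, ?_⟩
      have hF : F j0.1 = f j0 := hFnD j0.1 j0.2
      rw [hF]
      exact mul_pos (hwdpos _) (lt_of_le_of_ne (sq_nonneg _) (Ne.symm (pow_ne_zero 2 hj0')))
  -- the Dirichlet form
  set T : ℝ := ∑ x, ∑ y, w x y * (F x - F y) ^ 2 with hTdef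
  have hA1 : ∑ x, ∑ y, w x y * F x ^ 2 = S := by
    refine Finset.sum_congr rfl (fun x _ => ?_)
    rw [← Finset.sum_mul, ← hwd]
  have hA2 : ∑ x, ∑ y, w x y * F y ^ 2 = S := by
    rw [Finset.sum_comm]
    refine Finset.sum_congr rfl (fun y _ => ?_)
    rw [← Finset.sum_mul]
    have hcol : ∑ x, w x y = wd y := by
      rw [hwd]
      exact Finset.sum_congr rfl (fun x _ => hsymm x y)
    rw [hcol]
  have hA3 : ∑ x, ∑ y, w x y * (F x * F y) = lam * S := by
    have hterm : ∀ x : V, ∑ y, w x y * (F x * F y) = lam * (wd x * F x ^ 2) := by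
      intro x
      by_cases hx : x ∈ D
      · have h0 : F x = 0 := hFD x hx
        simp [h0]
      · have h := hEig x hx
        calc ∑ y, w x y * (F x * F y) = F x * ∑ y, w x y * F y := by
              rw [Finset.mul_sum]; exact Finset.sum_congr rfl (fun y _ => by ring)
          _ = F x * (lam * (wd x * F x)) := by rw [h]
          _ = lam * (wd x * F x ^ 2) := by ring
    rw [Finset.sum_congr rfl (fun x _ => hterm x), ← Finset.mul_sum]
  have hT : T = 2 * (1 - lam) * S := by
    have expand : ∀ x y : V, w x y * (F x - F y) ^ 2
        = w x y * F x ^ 2 + w x y * F y ^ 2 - 2 * (w x y * (F x * F y)) := fun x y => by ring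
    calc T = ∑ x, ∑ y, (w x y * F x ^ 2 + w x y * F y ^ 2 - 2 * (w x y * (F x * F y))) := by
          rw [hTdef]
          exact Finset.sum_congr rfl fun x _ => Finset.sum_congr rfl fun y _ => expand x y
      _ = (∑ x, ∑ y, w x y * F x ^ 2) + (∑ x, ∑ y, w x y * F y ^ 2)
          - 2 * (∑ x, ∑ y, w x y * (F x * F y)) := by
          simp [Finset.sum_add_distrib, Finset.sum_sub_distrib, Finset.mul_sum]
      _ = S + S - 2 * (lam * S) := by rw [hA1, hA2, hA3]
      _ = 2 * (1 - lam) * S := by ring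
  -- the path bound, vertex by vertex
  have hPB : ∀ i ∈ Finset.univ \ D, wd i * F i ^ 2 ≤
      ∑ e : V × V, (if e ∈ (p i).zip (p i).tail then
          wd i * (((p i).zip (p i).tail).map (fun e => 1 / w e.1 e.2)).sum else 0)
        * (w e.1 e.2 * (F e.1 - F e.2) ^ 2) := by
    intro i hi
    have hiD : i ∉ D := (Finset.mem_sdiff.mp hi).2
    obtain ⟨hhead, hchain, ⟨j, hjD, hlast⟩, hnodup⟩ := hpath i hiD
    obtain ⟨rest, hrest⟩ : ∃ rest, p i = i :: rest := by
      cases hpl : p i with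
      | nil => rw [hpl] at hhead; simp at hhead
      | cons a t => rw [hpl] at hhead; simp at hhead; exact ⟨t, by rw [hhead]⟩
    rw [hrest] at hchain hnodup hlast
    simp only [hrest, List.tail_cons]
    have hgl : (i :: rest).getLast (List.cons_ne_nil i rest) = j := by
      have h := List.getLast?_eq_getLast (l := i :: rest) (List.cons_ne_nil i rest)
      rw [h] at hlast
      exact Option.some.inj hlast
    have htc := tele_cs w hnonneg F rest i hchain
    rw [hgl, hFD j hjD, sub_zero] at htc
    have hzn : ((i :: rest).zip rest).Nodup := by
      have := zip_tail_nodup (i :: rest) hnodup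
      simpa using this
    rw [list_sum_indicator _ hzn (fun e => w e.1 e.2 * (F e.1 - F e.2) ^ 2)] at htc
    calc wd i * F i ^ 2
        ≤ wd i * ((((i :: rest).zip rest).map (fun e => 1 / w e.1 e.2)).sum *
            ∑ e : V × V, if e ∈ (i :: rest).zip rest then
              w e.1 e.2 * (F e.1 - F e.2) ^ 2 else 0) :=
          mul_le_mul_of_nonneg_left htc (hwdpos i).le
      _ = _ := by
          rw [Finset.mul_sum, Finset.mul_sum]
          exact Finset.sum_congr rfl (fun e _ => by split_ifs <;> ring)
  -- summing up
  have hmain : S ≤ ξ * T := by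
    have hS' : S = ∑ i ∈ Finset.univ \ D, wd i * F i ^ 2 := by
      rw [hSdef]
      exact (Finset.sum_subset (Finset.subset_univ _)
        (fun x _ hx => by rw [hFD x (by simpa using hx)]; ring)).symm
    rw [hS']
    calc ∑ i ∈ Finset.univ \ D, wd i * F i ^ 2
        ≤ ∑ i ∈ Finset.univ \ D, ∑ e : V × V,
            (if e ∈ (p i).zip (p i).tail then
              wd i * (((p i).zip (p i).tail).map (fun e => 1 / w e.1 e.2)).sum else 0)
            * (w e.1 e.2 * (F e.1 - F e.2) ^ 2) := Finset.sum_le_sum hPB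
      _ = ∑ e : V × V, (∑ i ∈ Finset.univ \ D,
            if e ∈ (p i).zip (p i).tail then
              wd i * (((p i).zip (p i).tail).map (fun e => 1 / w e.1 e.2)).sum else 0)
            * (w e.1 e.2 * (F e.1 - F e.2) ^ 2) := by
          rw [Finset.sum_comm]
          exact Finset.sum_congr rfl (fun e _ => (Finset.sum_mul _ _ _).symm)
      _ ≤ ∑ e : V × V, ξ * (w e.1 e.2 * (F e.1 - F e.2) ^ 2) := by
          refine Finset.sum_le_sum ?_
          rintro ⟨x, y⟩ _
          rcases (hnonneg x y).eq_or_lt with h0 | hpos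
          · simp [← h0]
          · refine mul_le_mul_of_nonneg_right (hξ x y hpos) ?_
            have := hnonneg x y
            positivity
      _ = ξ * T := by
          rw [← Finset.mul_sum, hTdef]
          congr 1
          exact Fintype.sum_prod_type _
  -- positivity of ξ
  have hξpos : 0 < ξ := by
    obtain ⟨i, hiD⟩ : ∃ i, i ∉ D := by
      by_contra h
      push_neg at h
      exact hDproper (Finset.eq_univ_iff_forall.mpr h)
    obtain ⟨hhead, hchain, ⟨j, hjD, hlast⟩, hnodup⟩ := hpath i hiD
    obtain ⟨rest, hrest⟩ : ∃ rest, p i = i :: rest := by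
      cases hpl : p i with
      | nil => rw [hpl] at hhead; simp at hhead
      | cons a t => rw [hpl] at hhead; simp at hhead; exact ⟨t, by rw [hhead]⟩
    cases rest with
    | nil =>
      rw [hrest] at hlast
      simp only [List.getLast?_singleton, Option.some.injEq] at hlast
      exact absurd (hlast ▸ hjD) hiD
    | cons b t =>
      have hwib : 0 < w i b := by
        rw [hrest] at hchain
        exact (List.isChain_cons_cons.mp hchain).1
      refine lt_of_lt_of_le ?_ (hξ i b hwib)
      apply Finset.sum_pos'
      · intro k _
        split_ifs
        · refine mul_nonneg (hwdpos k).le (List.sum_nonneg ?_)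
          intro x hx
          obtain ⟨e, _, rfl⟩ := List.mem_map.mp hx
          exact one_div_nonneg.mpr (hnonneg _ _)
        · exact le_refl 0
      · refine ⟨i, Finset.mem_sdiff.mpr ⟨Finset.mem_univ _, hiD⟩, ?_⟩
        have hmem : ((i : V), b) ∈ (p i).zip (p i).tail := by
          rw [hrest]
          simp
        rw [if_pos hmem]
        refine mul_pos (hwdpos i) ?_
        rw [hrest]
        simp only [List.tail_cons, List.zip_cons_cons, List.map_cons, List.sum_cons]
        have h1 : 0 < 1 / w i b := by positivity
        have h2 : 0 ≤ (List.map (fun e => 1 / w e.1 e.2) ((b :: t).zip t)).sum := by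
          apply List.sum_nonneg
          intro x hx
          obtain ⟨e, _, rfl⟩ := List.mem_map.mp hx
          exact one_div_nonneg.mpr (hnonneg _ _)
        linarith
  -- conclusion
  have hfin : S ≤ ξ * (2 * (1 - lam) * S) := hT ▸ hmain
  have h2 : 1 ≤ 2 * ξ * (1 - lam) := by nlinarith [hSpos, hfin]
  have h3 : 0 < 1 - lam := by nlinarith [hξpos, h2]
  rw [div_le_iff₀ h3]
  nlinarith [h2]
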